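/- (Proposition 3.2, large-claim case.) Let ξ₁ > 0, ξ₂ > 0, a > 0, y > 0, and set d = ξ₂/a + ξ₂/(2ξ₁). If y > d, then the function F(l₁, l₂) := −ξ₁·l₁² − ξ₂·l₂ − (a/2)·(y − l₁ − l₂)² attains its maximum over the set K = { (l₁, l₂) : l₁ ≥ 0, l₂ ≥ 0, l₁ + l₂ ≤ y } uniquely at the point (l₁, l₂) = ( ξ₂/(2ξ₁), y − d ). -/

import Mathlib

/-- **Proposition 3.2, large-claim case.** If y > d, the insurer's
pointwise objective attains its maximum over the admissible set uniquely at
(l₁, l₂) = (ξ₂/(2ξ₁), y − d), where d = ξ₂/a + ξ₂/(2ξ₁). -/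
theorem stmt_19 (ξ₁ ξ₂ a y : ℝ) (hξ₁ : 0 < ξ₁) (hξ₂ : 0 < ξ₂) (ha : 0 < a)
    (hy : 0 < y) (hyd : ξ₂ / a + ξ₂ / (2 * ξ₁) < y) :
    (ξ₂ / (2 * ξ₁), y - (ξ₂ / a + ξ₂ / (2 * ξ₁))) ∈
      {p : ℝ × ℝ | 0 ≤ p.1 ∧ 0 ≤ p.2 ∧ p.1 + p.2 ≤ y} ∧
    ∀ p ∈ {p : ℝ × ℝ | 0 ≤ p.1 ∧ 0 ≤ p.2 ∧ p.1 + p.2 ≤ y},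
      p ≠ (ξ₂ / (2 * ξ₁), y - (ξ₂ / a + ξ₂ / (2 * ξ₁))) →
      -ξ₁ * p.1 ^ 2 - ξ₂ * p.2 - (a / 2) * (y - p.1 - p.2) ^ 2 <
        -ξ₁ * (ξ₂ / (2 * ξ₁)) ^ 2 - ξ₂ * (y - (ξ₂ / a + ξ₂ / (2 * ξ₁))) -
          (a / 2) * (y - ξ₂ / (2 * ξ₁) - (y - (ξ₂ / a + ξ₂ / (2 * ξ₁)))) ^ 2 := by
  set c1 : ℝ := ξ₂ / (2 * ξ₁) with hc1
  set c2 : ℝ := ξ₂ / a with hc2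
  have hc1' : 2 * ξ₁ * c1 = ξ₂ := by rw [hc1]; field_simp [hξ₁.ne']
  have hc2' : a * c2 = ξ₂ := by rw [hc2]; field_simp [ha.ne']
  have hc1pos : 0 < c1 := by positivity
  have hc2pos : 0 < c2 := by positivity
  constructor
  · exact ⟨le_of_lt hc1pos, by simp only; linarith, by simp only; linarith⟩
  · rintro ⟨l1, l2⟩ ⟨h1, h2, h3⟩ hne
    simp only [ne_eq, Prod.mk.injEq, not_and_or] at hne
    simp only at h1 h2 h3 ⊢
    have key : 0 < ξ₁ * (l1 - c1) ^ 2 + (a / 2) * (l1 + l2 - y + c2) ^ 2 := by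
      by_cases hc : l1 = c1
      · have hl2 : l2 ≠ y - (c2 + c1) := by tauto
        have : l1 + l2 - y + c2 ≠ 0 := by
          intro h; apply hl2; rw [hc] at h; linarith
        have := sq_pos_of_ne_zero this
        nlinarith [sq_nonneg (l1 - c1)]
      · have : l1 - c1 ≠ 0 := sub_ne_zero.mpr hc
        have := sq_pos_of_ne_zero this
        nlinarith [sq_nonneg (l1 + l2 - y + c2)]
    nlinarith [key, sq_nonneg (l1 - c1), sq_nonneg (l1 + l2 - y + c2)]
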